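/- arXiv:1705.03307 — 2 statements merged into one kernel-verified Lean document; each statement's English description precedes it below -/
import Mathlib

section
/- Let C be an inverse category with a finite type of objects, and let X : C → 𝒰ˢ be a Reedy fibrant diagram that is pointwise essentially fibrant. Then the limit of X is essentially fibrant. -/
/-- The data of a two-level type theory (over Lean's strict layer, where
strict equality is `Eq` and strict isomorphism is `Equiv`): a fibrancy
predicate on pretypes, fibrant identity types with their elimination rule
into fibrant families, and closure of fibrant types under `Π` and `Σ`. -/
structure TLTT : Type 1 where
  Fib : Type → Prop
  Id : (A : Type) → A → A → Type
  idRefl : {A : Type} → (a : A) → Id A a a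
  fibId : ∀ {A : Type}, Fib A → ∀ a b : A, Fib (Id A a b)
  idElim : {A : Type} → (a : A) → (P : (b : A) → Id A a b → Type) →
    (∀ b p, Fib (P b p)) → P a (idRefl a) → ∀ b p, P b p
  idComp : ∀ {A : Type} (a : A) (P : (b : A) → Id A a b → Type)
      (hP : ∀ b p, Fib (P b p)) (d : P a (idRefl a)),
      idElim a P hP d a (idRefl a) = d
  fibUnit : Fib PUnit
  fibPi : ∀ {A : Type} {B : A → Type}, Fib A → (∀ a, Fib (B a)) → Fib (∀ a, B a)
  fibSigma : ∀ {A : Type} {B : A → Type}, Fib A → (∀ a, Fib (B a)) → Fib (Σ a, B a)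

namespace TwoLevel

/-- A pretype is essentially fibrant if it is strictly isomorphic to a fibrant type. -/
def EssFib (T : TLTT) (A : Type) : Prop := ∃ B : Type, T.Fib B ∧ Nonempty (A ≃ B)

/-- A pretype is finite if it is strictly isomorphic to some `Fin n`. -/
def IsFinite (A : Type) : Prop := ∃ n : ℕ, Nonempty (A ≃ Fin n)

/-- A map is a fibration if all of its strict fibres are essentially fibrant. -/
def IsFibration (T : TLTT) {E B : Type} (p : E → B) : Prop :=
  ∀ b : B, EssFib T { e : E // p e = b }

/-- Homotopy equivalence of pretypes with respect to the fibrant identity type. -/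
def IsHEquiv (T : TLTT) {A B : Type} (f : A → B) : Prop :=
  ∃ g : B → A, (∀ a, Nonempty (T.Id A (g (f a)) a)) ∧ (∀ b, Nonempty (T.Id B (f (g b)) b))

/-- A pretype is cofibrant if exponentiating out of it preserves fibrations. -/
def Cofibrant (T : TLTT) (A : Type) : Prop :=
  ∀ {X Y : Type} (p : X → Y), IsFibration T p → IsFibration T (fun g : A → X => p ∘ g)

/-- A cofibration is a complemented monomorphism with cofibrant complement. -/
def IsCofibration (T : TLTT) {A B : Type} (f : A → B) : Prop :=
  ∃ Ac : Type, Cofibrant T Ac ∧ ∃ g : Ac → B, Function.Bijective (Sum.elim f g)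

end TwoLevel
/-- Strict categories: categorical laws hold up to strict equality. -/
structure SCat : Type 1 where
  Obj : Type
  Hom : Obj → Obj → Type
  id : ∀ x, Hom x x
  comp : ∀ {x y z}, Hom y z → Hom x y → Hom x z
  id_comp : ∀ {x y} (f : Hom x y), comp (id y) f = f
  comp_id : ∀ {x y} (f : Hom x y), comp f (id x) = f
  assoc : ∀ {w x y z} (h : Hom y z) (g : Hom x y) (f : Hom w x),
    comp (comp h g) f = comp h (comp g f)

/-- Strict (pretype-valued) diagrams on a strict category. -/
structure SFunctor (C : SCat) : Type 1 where
  obj : C.Obj → Type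
  map : ∀ {x y}, C.Hom x y → obj x → obj y
  map_id : ∀ {x} (a : obj x), map (C.id x) a = a
  map_comp : ∀ {x y z} (g : C.Hom y z) (f : C.Hom x y) (a : obj x),
    map g (map f a) = map (C.comp g f) a

/-- Strict natural transformations of diagrams. -/
structure SNat {C : SCat} (X Y : SFunctor C) : Type where
  app : ∀ i, X.obj i → Y.obj i
  nat : ∀ {i j} (f : C.Hom i j) (a : X.obj i), Y.map f (app i a) = app j (X.map f a)

theorem SNat.ext' {C : SCat} {X Y : SFunctor C} {f g : SNat X Y}
    (h : f.app = g.app) : f = g := by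
  cases f; cases g; cases h; rfl

/-- Composition of natural transformations. -/
def natComp {C : SCat} {X Y Z : SFunctor C} (g : SNat Y Z) (f : SNat X Y) : SNat X Z :=
  ⟨fun i a => g.app i (f.app i a), by intro i j u a; rw [g.nat, f.nat]⟩

/-- The (strict) limit of a diagram, realised as the pretype of cones with tip `1`. -/
def SLimit (C : SCat) (X : SFunctor C) : Type :=
  { c : ∀ i, X.obj i // ∀ ⦃i j⦄ (f : C.Hom i j), X.map f (c i) = c j }

/-- The constant diagram. -/
def constF (C : SCat) (A : Type) : SFunctor C :=
  ⟨fun _ => A, fun _ a => a, fun _ => rfl, fun _ _ _ => rfl⟩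

/-- `f` is not an identity morphism. -/
def NotId (C : SCat) {x y : C.Obj} (f : C.Hom x y) : Prop :=
  ¬ ∃ _h : x = y, HEq f (C.id x)

/-- Objects of the reduced coslice `z ⫽ C`. -/
def RedCoslice (C : SCat) (z : C.Obj) : Type :=
  Σ y : C.Obj, { f : C.Hom z y // NotId C f }

/-- The reduced coslice category `z ⫽ C`. -/
def RedCosliceCat (C : SCat) (z : C.Obj) : SCat where
  Obj := RedCoslice C z
  Hom w w' := { h : C.Hom w.1 w'.1 // C.comp h w.2.1 = w'.2.1 }
  id w := ⟨C.id w.1, C.id_comp _⟩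
  comp h g := ⟨C.comp h.1 g.1, by rw [C.assoc, g.2, h.2]⟩
  id_comp f := Subtype.ext (C.id_comp _)
  comp_id f := Subtype.ext (C.comp_id _)
  assoc h g f := Subtype.ext (C.assoc _ _ _)

/-- Restriction of a diagram along the forgetful functor `z ⫽ C → C`. -/
def restrictRC {C : SCat} (X : SFunctor C) (z : C.Obj) : SFunctor (RedCosliceCat C z) where
  obj w := X.obj w.1
  map h a := X.map h.1 a
  map_id a := X.map_id a
  map_comp g f a := X.map_comp g.1 f.1 a

/-- The matching object `M_z^X`: the limit of `X` over the reduced coslice. -/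
def Matching {C : SCat} (X : SFunctor C) (z : C.Obj) : Type :=
  SLimit (RedCosliceCat C z) (restrictRC X z)

/-- The canonical map `X_z → M_z^X`. -/
def canMatch {C : SCat} (X : SFunctor C) (z : C.Obj) (x : X.obj z) : Matching X z :=
  ⟨fun w => X.map w.2.1 x, by
    intro w w' h
    exact (X.map_comp h.1 w.2.1 x).trans (by rw [h.2])⟩

/-- A diagram is Reedy fibrant if each canonical map `X_z → M_z^X` is a fibration. -/
def ReedyFibrant (T : TLTT) {C : SCat} (X : SFunctor C) : Prop :=
  ∀ z, TwoLevel.IsFibration T (canMatch X z)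

/-- The map induced on matching objects by a natural transformation. -/
def matchNat {C : SCat} {X Y : SFunctor C} (p : SNat X Y) (z : C.Obj) :
    Matching X z → Matching Y z :=
  fun c => ⟨fun w => p.app w.1 (c.1 w), by
    intro w w' h
    exact (p.nat h.1 (c.1 w)).trans (congrArg (p.app w'.1) (c.2 h))⟩

/-- The relative matching map `X_n → M_n^X ×_{M_n^Y} Y_n` of `p : X → Y`. -/
def relMatchMap {C : SCat} {X Y : SFunctor C} (p : SNat X Y) (n : C.Obj) :
    X.obj n → { q : Matching X n × Y.obj n // matchNat p n q.1 = canMatch Y n q.2 } :=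
  fun x => ⟨(canMatch X n x, p.app n x), by
    apply Subtype.ext
    funext w
    exact (p.nat w.2.1 x).symm⟩

/-- A natural transformation is a Reedy fibration if all of its relative matching
maps are fibrations. -/
def IsReedyFibration (T : TLTT) {C : SCat} {X Y : SFunctor C} (p : SNat X Y) : Prop :=
  ∀ n, TwoLevel.IsFibration T (relMatchMap p n)

/-- An inverse category: a strict category with a rank function such that every
morphism either strictly decreases the rank or is an identity. -/
def IsInverse (C : SCat) : Prop :=
  ∃ φ : C.Obj → ℕ, ∀ ⦃x y⦄ (f : C.Hom x y), φ x > φ y ∨ ∃ h : x = y, HEq f (C.id x)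

/-- The map induced on limits by a natural transformation. -/
def limMap {C : SCat} {X Y : SFunctor C} (p : SNat X Y) : SLimit C X → SLimit C Y :=
  fun c => ⟨fun i => p.app i (c.1 i), by
    intro i j f
    exact (p.nat f (c.1 i)).trans (congrArg (p.app j) (c.2 f))⟩

/-- An inverse category is admissible if Reedy fibrant diagrams over all of its
reduced coslices have essentially fibrant limits. -/
def Admissible (T : TLTT) (C : SCat) : Prop :=
  ∀ (z : C.Obj) (Y : SFunctor (RedCosliceCat C z)), ReedyFibrant T Y →
    TwoLevel.EssFib T (SLimit (RedCosliceCat C z) Y)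

/-- The pullback of diagrams `A ×_B X` along `f : A → B` and `p : X → B`,
computed pointwise. -/
def pbFunctor {C : SCat} {A B X : SFunctor C} (f : SNat A B) (p : SNat X B) :
    SFunctor C where
  obj i := { z : A.obj i × X.obj i // f.app i z.1 = p.app i z.2 }
  map g z := ⟨(A.map g z.1.1, X.map g z.1.2), by rw [← f.nat, ← p.nat, z.2]⟩
  map_id z := by
    apply Subtype.ext
    exact Prod.ext (A.map_id _) (X.map_id _)
  map_comp g h z := by
    apply Subtype.ext
    exact Prod.ext (A.map_comp _ _ _) (X.map_comp _ _ _)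

/-- Projection from the pullback of diagrams to the base. -/
def pbProj {C : SCat} {A B X : SFunctor C} (f : SNat A B) (p : SNat X B) :
    SNat (pbFunctor f p) A :=
  ⟨fun _ z => z.1.1, fun _ _ => rfl⟩

/-- A pushout square of diagrams, via its universal property. -/
def IsPushout {C : SCat} {P A B Q : SFunctor C} (f : SNat P A) (g : SNat P B)
    (ia : SNat A Q) (ib : SNat B Q) : Prop :=
  natComp ia f = natComp ib g ∧
  ∀ (W : SFunctor C) (u : SNat A W) (v : SNat B W),
    natComp u f = natComp v g → ∃! w : SNat Q W, natComp w ia = u ∧ natComp w ib = v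
/-- Hom-pretypes of the category `C* = 1 ⋆ C` obtained by freely adjoining an
initial object `none`. -/
def OHom (C : SCat) : Option C.Obj → Option C.Obj → Type
  | none, _ => PUnit
  | some _, none => Empty
  | some a, some b => C.Hom a b

def oid (C : SCat) : ∀ x : Option C.Obj, OHom C x x
  | none => PUnit.unit
  | some a => C.id a

def ocomp (C : SCat) : ∀ {x y z : Option C.Obj}, OHom C y z → OHom C x y → OHom C x z
  | none, _, _, _, _ => PUnit.unit
  | some _, none, _, _, f => f.elim
  | some _, some _, none, g, _ => g.elim
  | some _, some _, some _, g, f => C.comp g f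

/-- The category `C* = 1 ⋆ C`. -/
def CStar (C : SCat) : SCat where
  Obj := Option C.Obj
  Hom := OHom C
  id := oid C
  comp := ocomp C
  id_comp {x y} f := by
    cases x <;> cases y
    · rfl
    · rfl
    · exact f.elim
    · exact C.id_comp f
  comp_id {x y} f := by
    cases x <;> cases y
    · rfl
    · rfl
    · exact f.elim
    · exact C.comp_id f
  assoc {w x y z} h g f := by
    cases w <;> cases x <;> cases y <;> cases z <;>
      first
        | rfl
        | exact f.elim
        | exact g.elim
        | exact h.elim
        | exact C.assoc h g f

/-- Restriction of a diagram on `C*` to `C`. -/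
def restrictC {C : SCat} (X : SFunctor (CStar C)) : SFunctor C where
  obj i := X.obj (some i)
  map {i j} f a := X.map (x := some i) (y := some j) f a
  map_id a := X.map_id a
  map_comp g f a := X.map_comp (x := some _) (y := some _) (z := some _) g f a

/-- Restriction of a natural transformation of diagrams on `C*` to `C`. -/
def restrictNat {C : SCat} {F G : SFunctor (CStar C)} (η : SNat F G) :
    SNat (restrictC F) (restrictC G) :=
  ⟨fun i a => η.app (some i) a, fun f a => η.nat (i := some _) (j := some _) f a⟩

/-- The canonical map `X(*) → lim_C X`. -/
def canLim {C : SCat} (X : SFunctor (CStar C)) : X.obj none → SLimit C (restrictC X) :=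
  fun x => ⟨fun i => X.map (x := none) (y := some i) PUnit.unit x, by
    intro i j f
    exact X.map_comp (x := none) (y := some i) (z := some j) f PUnit.unit x⟩
/-- The product of a diagram `F` with the Yoneda (corepresentable) diagram `C(d, −)`. -/
def yonProd {C : SCat} (F : SFunctor C) (d : C.Obj) : SFunctor C where
  obj c := F.obj c × C.Hom d c
  map f z := (F.map f z.1, C.comp f z.2)
  map_id z := by
    obtain ⟨a, g⟩ := z
    show (F.map (C.id _) a, C.comp (C.id _) g) = (a, g)
    rw [F.map_id, C.id_comp]
  map_comp g f z := by
    obtain ⟨a, u⟩ := z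
    show (F.map g (F.map f a), C.comp g (C.comp f u)) = (F.map (C.comp g f) a, C.comp (C.comp g f) u)
    rw [F.map_comp, C.assoc]

/-- The exponential diagram `[F, X]`, defined via Yoneda:
`[F, X](d) = Nat(F × C(d,−), X)`. -/
def expF {C : SCat} (F X : SFunctor C) : SFunctor C where
  obj d := SNat (yonProd F d) X
  map {d d'} h η :=
    ⟨fun c z => η.app c (z.1, C.comp z.2 h), by
      intro c c' f z
      refine (η.nat f (z.1, C.comp z.2 h)).trans ?_
      show η.app c' (F.map f z.1, C.comp f (C.comp z.2 h)) = η.app c' (F.map f z.1, C.comp (C.comp f z.2) h)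
      rw [C.assoc]⟩
  map_id {d} η := by
    apply SNat.ext'
    funext c z
    show η.app c (z.1, C.comp z.2 (C.id d)) = η.app c z
    rw [C.comp_id]
    rfl
  map_comp g f η := by
    apply SNat.ext'
    funext c z
    show η.app c (z.1, C.comp (C.comp z.2 g) f) = η.app c (z.1, C.comp z.2 (C.comp g f))
    rw [C.assoc]

/-- Whiskering a natural transformation with the Yoneda factor. -/
def prodWhisker {C : SCat} {F G : SFunctor C} (τ : SNat F G) (d : C.Obj) :
    SNat (yonProd F d) (yonProd G d) :=
  ⟨fun c z => (τ.app c z.1, z.2), by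
    intro c c' f z
    show (G.map f (τ.app c z.1), C.comp f z.2) = (τ.app c' (F.map f z.1), C.comp f z.2)
    rw [τ.nat]⟩

/-- The natural transformation `(− ∘ τ) : [G, X] → [F, X]` induced on exponentials
by precomposition with `τ : F → G`. -/
def expMap {C : SCat} {F G : SFunctor C} (τ : SNat F G) (X : SFunctor C) :
    SNat (expF G X) (expF F X) :=
  ⟨fun d η => natComp η (prodWhisker τ d), fun _ _ => SNat.ext' rfl⟩
/-- Morphisms `[m] → [k]` of the semi-simplex category `Δ₊ᵒᵖ`:
strictly monotone maps `Fin (k+1) → Fin (m+1)`. -/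
def DeltaHom (m k : ℕ) : Type := { f : Fin (k+1) → Fin (m+1) // StrictMono f }

/-- The semi-simplex category `Δ₊ᵒᵖ`. -/
@[reducible] def DeltaOp : SCat where
  Obj := ℕ
  Hom := DeltaHom
  id _ := ⟨_root_.id, strictMono_id⟩
  comp g f := ⟨f.1 ∘ g.1, f.2.comp g.2⟩
  id_comp _ := Subtype.ext rfl
  comp_id _ := Subtype.ext rfl
  assoc _ _ _ := Subtype.ext rfl

/-- A semi-simplicial set/type is a diagram on `Δ₊ᵒᵖ`. -/
abbrev SSDiagram : Type 1 := SFunctor DeltaOp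

theorem strictMono_fin_le {a b : ℕ} (g : Fin a → Fin b) (hg : StrictMono g) : a ≤ b := by
  simpa using Fintype.card_le_of_injective g hg.injective

set_option linter.deprecated false in
theorem strictMono_fin_id {a : ℕ} (g : Fin a → Fin a) (hg : StrictMono g) :
    ∀ i, g i = i := by
  have hsur : Function.Surjective g := Finite.injective_iff_surjective.mp hg.injective
  have hid : g = fun i => i := by
    apply (StrictMono.range_inj hg strictMono_id).mp
    rw [Set.range_id]
    exact Set.range_eq_univ.mpr hsur
  intro i; rw [hid]

/-- A subfunctor of the Yoneda (representable) semi-simplicial set `Δ^n`,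
given by a family of propositions closed under the functorial action. -/
structure SubP (n : ℕ) : Type where
  mem : ∀ k : ℕ, DeltaHom n k → Prop
  closed : ∀ ⦃k l : ℕ⦄ (g : DeltaHom k l) (f : DeltaHom n k),
    mem k f → mem l (DeltaOp.comp g f)

/-- The semi-simplicial set associated to a subfunctor of `Δ^n`. -/
def SubP.toF {n : ℕ} (S : SubP n) : SSDiagram where
  obj k := { f : DeltaHom n k // S.mem k f }
  map g f := ⟨DeltaOp.comp g f.1, S.closed g f.1 f.2⟩
  map_id _ := Subtype.ext (DeltaOp.id_comp _)
  map_comp _ _ _ := Subtype.ext (DeltaOp.assoc _ _ _).symm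

def SubP.le {n : ℕ} (S S' : SubP n) : Prop := ∀ k f, S.mem k f → S'.mem k f

/-- The inclusion of sub-semi-simplicial sets. -/
def SubP.incl {n : ℕ} {S S' : SubP n} (h : S.le S') : SNat S.toF S'.toF :=
  ⟨fun k f => ⟨f.1, h k f.1 f.2⟩, fun _ _ => rfl⟩

/-- The full subfunctor, i.e. the representable `Δ^n` itself. -/
def fullSub (n : ℕ) : SubP n := ⟨fun _ _ => True, by intros; trivial⟩

/-- The membership predicate of the spine `Sp^n`: all vertices, together with
the consecutive edges `i → i+1`. -/
def spineMem (n : ℕ) : ∀ k : ℕ, DeltaHom n k → Prop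
  | 0, _ => True
  | 1, f => (f.1 1 : ℕ) = (f.1 0 : ℕ) + 1
  | _ + 2, _ => False

/-- The spine `Sp^n` as a subfunctor of `Δ^n`. -/
def spineSub (n : ℕ) : SubP n where
  mem := spineMem n
  closed := by
    intro k l g f hf
    have hlk : l + 1 ≤ k + 1 := strictMono_fin_le g.1 g.2
    rcases l with _ | _ | l
    · trivial
    · rcases k with _ | _ | k
      · exact absurd hlk (by omega)
      · show ((f.1 (g.1 1) : Fin (n+1)) : ℕ) = ((f.1 (g.1 0) : Fin (n+1)) : ℕ) + 1
        have h0 : g.1 0 = 0 := strictMono_fin_id g.1 g.2 0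
        have h1 : g.1 1 = 1 := strictMono_fin_id g.1 g.2 1
        rw [h0, h1]
        exact hf
      · exact hf.elim
    · rcases k with _ | _ | k
      · exact absurd hlk (by omega)
      · exact absurd hlk (by omega)
      · exact hf.elim

/-- The membership predicate of the horn `Λ^n_k`: everything except the top cell
and the `k`-th face (the strictly monotone map skipping the value `k`,
described numerically). -/
def hornMem (n k : ℕ) (m : ℕ) (f : DeltaHom n m) : Prop :=
  if m = n then False
  else if m + 1 = n then
    ¬ (∀ i : Fin (m + 1), (f.1 i : ℕ) = if (i : ℕ) < k then (i : ℕ) else (i : ℕ) + 1)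
  else True

/-- The horn `Λ^n_k` as a subfunctor of `Δ^n`. -/
def hornSub (n k : ℕ) : SubP n where
  mem := hornMem n k
  closed := by
    intro m l g f hf
    have hlm : l + 1 ≤ m + 1 := strictMono_fin_le g.1 g.2
    have hmn : m + 1 ≤ n + 1 := strictMono_fin_le f.1 f.2
    unfold hornMem at hf ⊢
    by_cases hl : l = n
    · rw [if_pos hl]
      have hm : m = n := by omega
      rw [if_pos hm] at hf
      exact hf
    · rw [if_neg hl]
      by_cases hl1 : l + 1 = n
      · rw [if_pos hl1]
        by_cases hm : m = n
        · rw [if_pos hm] at hf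
          exact hf.elim
        · have hm1 : m + 1 = n := by omega
          rw [if_neg hm, if_pos hm1] at hf
          intro hs
          apply hf
          intro i
          have hml : m = l := by omega
          subst hml
          have hgi : g.1 i = i := strictMono_fin_id g.1 g.2 i
          have h2 : ((f.1 (g.1 i) : Fin (n+1)) : ℕ) =
              if (i : ℕ) < k then (i : ℕ) else (i : ℕ) + 1 := hs i
          rw [hgi] at h2
          exact h2
      · rw [if_neg hl1]
        trivial

/-- The spine is contained in `Δ^n`. -/
theorem spine_le_full (n : ℕ) : (spineSub n).le (fullSub n) := fun _ _ _ => trivial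

/-- The horn is contained in `Δ^n`. -/
theorem horn_le_full (n k : ℕ) : (hornSub n k).le (fullSub n) := fun _ _ _ => trivial

/-- The two vertex inclusions of an edge. -/
def V0 : DeltaHom 1 0 :=
  ⟨fun _ => 0, by
    intro a b hab
    exfalso
    have ha := a.isLt
    have hb := b.isLt
    rw [Fin.lt_def] at hab
    omega⟩

def V1 : DeltaHom 1 0 :=
  ⟨fun _ => 1, by
    intro a b hab
    exfalso
    have ha := a.isLt
    have hb := b.isLt
    rw [Fin.lt_def] at hab
    omega⟩

/-- The three faces of a 2-simplex: `Dface j` skips the vertex `j`. -/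
def Dface (j : Fin 3) : DeltaHom 2 1 := ⟨Fin.succAbove j, Fin.strictMono_succAbove j⟩

/-- The fibre of `X₁` over a pair of vertices: edges from `a` to `b`. -/
def EdgeT (X : SSDiagram) (a b : X.obj 0) : Type :=
  { e : X.obj 1 // X.map (x := 1) (y := 0) V0 e = a ∧ X.map (x := 1) (y := 0) V1 e = b }

/-- The fibre of `X₂` over a boundary triangle `(f, g, h)`. -/
def TriT (X : SSDiagram) {a b c : X.obj 0}
    (f : EdgeT X a b) (g : EdgeT X b c) (h : EdgeT X a c) : Type :=
  { t : X.obj 2 // X.map (x := 2) (y := 1) (Dface 2) t = f.1 ∧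
      X.map (x := 2) (y := 1) (Dface 0) t = g.1 ∧ X.map (x := 2) (y := 1) (Dface 1) t = h.1 }

/-- The Segal condition: locality with respect to all spine inclusions. -/
def SegalCondition (T : TLTT) (X : SSDiagram) : Prop :=
  ∀ n : ℕ, TwoLevel.IsHEquiv T
    (fun η : SNat (fullSub n).toF X => natComp η (SubP.incl (spine_le_full n)))
/-- The type of homotopy equivalences (with respect to the fibrant identity
type) between two pretypes. -/
def HEquivT (T : TLTT) (A B : Type) : Type :=
  Σ f : A → B, Σ g : B → A, (∀ a, T.Id A (g (f a)) a) × (∀ b, T.Id B (f (g b)) b)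

/-- The identity equivalence. -/
def idEquivT (T : TLTT) (A : Type) : HEquivT T A A :=
  ⟨_root_.id, _root_.id, fun a => T.idRefl a, fun b => T.idRefl b⟩
/-- Auxiliary: the full subcategory on objects distinct from `z`. -/
def FLsubC (C : SCat) (z : C.Obj) : SCat where
  Obj := {x : C.Obj // x ≠ z}
  Hom x y := C.Hom x.1 y.1
  id x := C.id x.1
  comp g f := C.comp g f
  id_comp f := C.id_comp f
  comp_id f := C.comp_id f
  assoc h g f := C.assoc h g f

/-- Auxiliary: restriction of a diagram to the full subcategory. -/
def FLsubX {C : SCat} (z : C.Obj) (X : SFunctor C) : SFunctor (FLsubC C z) where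
  obj i := X.obj i.1
  map f a := X.map f a
  map_id a := X.map_id a
  map_comp g f a := X.map_comp g f a

/-- Auxiliary: the matching cone at `z` induced by a cone over the rest. -/
def FLmatchOf {C : SCat} {z : C.Obj} (X : SFunctor C)
    (ht : ∀ {w y : C.Obj} (f : C.Hom w y), NotId C f → y ≠ z)
    (c : SLimit (FLsubC C z) (FLsubX z X)) : Matching X z :=
  ⟨fun o => c.1 ⟨o.1, ht o.2.1 o.2.2⟩, by
    intro o o' h
    exact c.2 (i := ⟨o.1, ht o.2.1 o.2.2⟩) (j := ⟨o'.1, ht o'.2.1 o'.2.2⟩) h.1⟩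

theorem FLessFib_of_equiv {T : TLTT} {A B : Type} (e : A ≃ B)
    (h : TwoLevel.EssFib T B) : TwoLevel.EssFib T A := by
  obtain ⟨B', hB', ⟨e'⟩⟩ := h
  exact ⟨B', hB', ⟨e.trans e'⟩⟩

theorem FLessFib_sigma {T : TLTT} {A : Type} {B : A → Type}
    (hA : TwoLevel.EssFib T A) (hB : ∀ a, TwoLevel.EssFib T (B a)) :
    TwoLevel.EssFib T (Σ a, B a) := by
  obtain ⟨A', hA', ⟨e⟩⟩ := hA
  choose B' hB' hBe using hB
  refine ⟨Σ a' : A', B' (e.symm a'), T.fibSigma hA' (fun a' => hB' _), ⟨?_⟩⟩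
  exact Equiv.sigmaCongr e (fun a =>
    ((hBe a).some.trans (Equiv.cast (congrArg B' (e.symm_apply_apply a).symm))))
/-- Auxiliary: translating reduced-coslice objects into the subcategory. -/
def FLtoCos {C : SCat} {z : C.Obj}
    (ht : ∀ {w y : C.Obj} (f : C.Hom w y), NotId C f → y ≠ z)
    (w : {x : C.Obj // x ≠ z}) (o : RedCoslice C w.1) : RedCoslice (FLsubC C z) w :=
  ⟨⟨o.1, ht o.2.1 o.2.2⟩, o.2.1, fun ⟨h, hh⟩ => o.2.2 ⟨congrArg Subtype.val h, hh⟩⟩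

/-- Auxiliary: translating reduced-coslice objects out of the subcategory. -/
def FLofCos {C : SCat} {z : C.Obj} (w : {x : C.Obj // x ≠ z})
    (o : RedCoslice (FLsubC C z) w) : RedCoslice C w.1 :=
  ⟨o.1.1, o.2.1, fun ⟨h, hh⟩ => o.2.2 ⟨Subtype.ext h, hh⟩⟩

/-- Auxiliary: translation of matching objects. -/
def FLub {C : SCat} {z : C.Obj} (X : SFunctor C)
    (ht : ∀ {w y : C.Obj} (f : C.Hom w y), NotId C f → y ≠ z)
    (w : {x : C.Obj // x ≠ z}) (b : Matching (FLsubX z X) w) : Matching X w.1 :=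
  ⟨fun o => b.1 (FLtoCos ht w o), fun o o' h =>
    b.2 (i := FLtoCos ht w o) (j := FLtoCos ht w o') ⟨h.1, h.2⟩⟩
theorem FLaux (T : TLTT) : ∀ (n : ℕ) (C : SCat), IsInverse C → (C.Obj ≃ Fin n) →
    ∀ X : SFunctor C, ReedyFibrant T X → TwoLevel.EssFib T (SLimit C X) := by
  intro n
  induction n with
  | zero =>
    intro C _ e X _
    refine ⟨PUnit, T.fibUnit, ⟨⟨fun _ => PUnit.unit,
      fun _ => ⟨fun i => Fin.elim0 (e i), fun i _ f => Fin.elim0 (e i)⟩,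
      ?_, fun u => rfl⟩⟩⟩
    intro c
    apply Subtype.ext
    funext i
    exact Fin.elim0 (e i)
  | succ n ih =>
    intro C hC e X hR
    classical
    obtain ⟨φ, hφ⟩ := hC
    letI : Fintype C.Obj := Fintype.ofEquiv _ e.symm
    haveI : Nonempty C.Obj := ⟨e.symm 0⟩
    obtain ⟨z, hz⟩ := Finite.exists_max φ
    -- every morphism into z is an identity
    have hinto : ∀ {w : C.Obj} (f : C.Hom w z), ∃ h : w = z, HEq f (C.id w) := by
      intro w f
      rcases hφ f with h | h
      · exact absurd h (by have := hz w; omega)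
      · exact h
    -- targets of non-identity morphisms avoid z
    have ht : ∀ {w y : C.Obj} (f : C.Hom w y), NotId C f → y ≠ z := by
      intro w y f hf hy
      subst hy
      exact hf (hinto f)
    -- the subcategory is inverse
    have hC' : IsInverse (FLsubC C z) := by
      refine ⟨fun x => φ x.1, ?_⟩
      intro x y f
      rcases hφ (x := x.1) (y := y.1) f with h | ⟨h, hh⟩
      · exact Or.inl h
      · exact Or.inr ⟨Subtype.ext h, hh⟩
    have e' : {x : C.Obj // x ≠ z} ≃ Fin n :=
      ((e.subtypeEquiv (fun a => by
        constructor
        · intro h he; exact h (by simpa using congrArg e.symm he)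
        · intro h he; exact h (by rw [he]))).trans
        (finSuccAboveEquiv (e z)).symm)
    -- Reedy fibrancy of the restricted diagram
    have hR' : ReedyFibrant T (FLsubX z X) := by
      intro w b
      refine FLessFib_of_equiv (Equiv.subtypeEquivRight (fun x => ?_))
        (hR w.1 (FLub X ht w b))
      constructor
      · intro h
        apply Subtype.ext
        funext o
        exact congrFun (congrArg Subtype.val h) (FLtoCos ht w o)
      · intro h
        apply Subtype.ext
        funext o'
        exact congrFun (congrArg Subtype.val h) (FLofCos w o')
    -- the decomposition of the limit
    have E : SLimit C X ≃ {q : SLimit (FLsubC C z) (FLsubX z X) × X.obj z //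
        canMatch X z q.2 = FLmatchOf X ht q.1} := by
      refine ⟨fun c => ⟨(⟨fun i => c.1 i.1, fun i j f => c.2 f⟩, c.1 z), ?_⟩,
        fun q => ⟨fun i => if hi : i = z then cast (congrArg X.obj hi.symm) q.1.2
          else q.1.1.1 ⟨i, hi⟩, ?_⟩, ?_, ?_⟩
      · apply Subtype.ext
        funext o
        exact c.2 o.2.1
      · intro a b f
        dsimp only
        by_cases ha : a = z
        · subst ha
          by_cases hb : b = a
          · subst hb
            obtain ⟨-, hf⟩ := hinto f
            rw [eq_of_heq hf]
            erw [dif_pos rfl]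
            exact X.map_id _
          · erw [dif_pos rfl, dif_neg hb]
            have nf : NotId C f := fun ⟨h, _⟩ => hb h.symm
            exact congrFun (congrArg Subtype.val q.2) ⟨b, f, nf⟩
        · by_cases hb : b = z
          · subst hb
            obtain ⟨h, -⟩ := hinto f
            exact absurd h ha
          · erw [dif_neg ha, dif_neg hb]
            exact q.1.1.2 (i := ⟨a, ha⟩) (j := ⟨b, hb⟩) f
      · intro c
        apply Subtype.ext
        funext i
        dsimp only
        by_cases hi : i = z
        · subst hi
          rw [dif_pos rfl]
          rfl
        · rw [dif_neg hi]
      · intro q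
        apply Subtype.ext
        refine Prod.ext ?_ ?_
        · apply Subtype.ext
          funext i
          dsimp only
          erw [dif_neg i.2]
          rfl
        · dsimp only
          erw [dif_pos rfl]
          rfl
    refine FLessFib_of_equiv E ?_
    refine FLessFib_of_equiv (Equiv.subtypeProdEquivSigmaSubtype
      (fun a b => canMatch X z b = FLmatchOf X ht a)) ?_
    exact FLessFib_sigma (ih (FLsubC C z) hC' e' (FLsubX z X) hR')
      (fun c => hR z (FLmatchOf X ht c))
/-- a Reedy fibrant, pointwise essentially fibrant diagram over an
inverse category with a finite pretype of objects has an essentially fibrant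
limit. -/
theorem fibrant_limits (T : TLTT) (C : SCat) (hC : IsInverse C)
    (hfin : TwoLevel.IsFinite C.Obj) (X : SFunctor C)
    (hR : ReedyFibrant T X) (hpt : ∀ i, TwoLevel.EssFib T (X.obj i)) :
    TwoLevel.EssFib T (SLimit C X) := by
  obtain ⟨n, ⟨e⟩⟩ := hfin
  exact FLaux T n C hC e X hR
end

section
/- Any natural transformation f : X → Z of fibrant-type-valued diagrams over an admissible inverse category C factors as f = p ∘ i, where i : X → Y is a levelwise homotopy equivalence and p : Y → Z is a Reedy fibration. In particular (taking Z constant on the unit type), every type-valued diagram over C admits a Reedy fibrant replacement: a Reedy fibrant diagram Y with a levelwise equivalence X → Y. -/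
namespace ReedyAux
open TwoLevel

theorem essFib_of_equiv {T : TLTT} {A B : Type} (e : A ≃ B) (h : EssFib T B) : EssFib T A := by
  obtain ⟨F, hF, ⟨u⟩⟩ := h
  exact ⟨F, hF, ⟨e.trans u⟩⟩

theorem essFib_of_fib {T : TLTT} {A : Type} (h : T.Fib A) : EssFib T A :=
  ⟨A, h, ⟨Equiv.refl A⟩⟩

theorem essFib_sigma {T : TLTT} {A : Type} {B : A → Type} (hA : T.Fib A)
    (hB : ∀ a, EssFib T (B a)) : EssFib T (Σ a, B a) := by
  choose F hF e using hB
  have e' : ∀ a, B a ≃ F a := fun a => Classical.choice (e a)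
  exact ⟨Σ a, F a, T.fibSigma hA hF, ⟨Equiv.sigmaCongrRight e'⟩⟩

theorem fib_eq {T : TLTT} {A B : Type} (h : A = B) (hA : T.Fib A) : T.Fib B := h ▸ hA

theorem hequiv_cast {T : TLTT} {A B B' : Type} (h : B = B') {f : A → B}
    (hf : IsHEquiv T f) : IsHEquiv T (fun a => cast h (f a)) := by subst h; exact hf

theorem rank_lt {C : SCat} {φ : C.Obj → ℕ}
    (hφ : ∀ ⦃x y : C.Obj⦄ (f : C.Hom x y), φ x > φ y ∨ ∃ h : x = y, HEq f (C.id x))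
    {x y : C.Obj} (g : C.Hom x y) (hg : NotId C g) : φ y < φ x :=
  (hφ g).resolve_right hg

theorem notId_of_rank {C : SCat} {φ : C.Obj → ℕ} {x y : C.Obj} (g : C.Hom x y)
    (h : φ y < φ x) : NotId C g := by
  rintro ⟨e, _⟩; subst e; omega

theorem wlt {C : SCat} {φ : C.Obj → ℕ}
    (hφ : ∀ ⦃x y : C.Obj⦄ (f : C.Hom x y), φ x > φ y ∨ ∃ h : x = y, HEq f (C.id x))
    {n : C.Obj} (w : RedCoslice C n) : φ w.1 < φ n :=
  rank_lt hφ w.2.1 w.2.2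

section Main

variable (T : TLTT) (C : SCat) (φ : C.Obj → ℕ)
  (hφ : ∀ ⦃x y : C.Obj⦄ (f : C.Hom x y), φ x > φ y ∨ ∃ h : x = y, HEq f (C.id x))
  (X Z : SFunctor C) (f : SNat X Z)

/-- The partial construction below rank `k`. -/
structure Part (k : ℕ) : Type 1 where
  Yo : ∀ n, φ n < k → Type
  Ym : ∀ {a b : C.Obj}, C.Hom a b → ∀ (ha : φ a < k) (hb : φ b < k), Yo a ha → Yo b hb
  Ym_id : ∀ n (h : φ n < k) (x : Yo n h), Ym (C.id n) h h x = x
  Ym_comp : ∀ {a b c : C.Obj} (g : C.Hom b c) (g' : C.Hom a b) (ha : φ a < k)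
      (hb : φ b < k) (hc : φ c < k) (x : Yo a ha),
      Ym g hb hc (Ym g' ha hb x) = Ym (C.comp g g') ha hc x
  hYfib : ∀ n h, T.Fib (Yo n h)
  io : ∀ n (h : φ n < k), X.obj n → Yo n h
  po : ∀ n (h : φ n < k), Yo n h → Z.obj n
  io_nat : ∀ {a b : C.Obj} (g : C.Hom a b) (ha : φ a < k) (hb : φ b < k) (x : X.obj a),
      Ym g ha hb (io a ha x) = io b hb (X.map g x)
  po_nat : ∀ {a b : C.Obj} (g : C.Hom a b) (ha : φ a < k) (hb : φ b < k) (y : Yo a ha),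
      Z.map g (po a ha y) = po b hb (Ym g ha hb y)
  pio : ∀ n h x, po n h (io n h x) = f.app n x
  hheq : ∀ n h, TwoLevel.IsHEquiv T (io n h)
  hfib : ∀ n (hn : φ n < k)
      (m : ∀ w : RedCoslice C n, Yo w.1 (lt_trans (wlt hφ w) hn))
      (_ : ∀ ⦃w w' : RedCoslice C n⦄ (h : (RedCosliceCat C n).Hom w w'),
        Ym h.1 (lt_trans (wlt hφ w) hn) (lt_trans (wlt hφ w') hn) (m w) = m w')
      (z : Z.obj n) (_ : ∀ w, po w.1 (lt_trans (wlt hφ w) hn) (m w) = Z.map w.2.1 z),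
      TwoLevel.EssFib T
        {y : Yo n hn //
          (∀ w, Ym w.2.1 hn (lt_trans (wlt hφ w) hn) y = m w) ∧ po n hn y = z}

end Main
end ReedyAux
namespace ReedyAux
open TwoLevel

section Main2

variable {T : TLTT} {C : SCat} {φ : C.Obj → ℕ}
  (hφ : ∀ ⦃x y : C.Obj⦄ (f : C.Hom x y), φ x > φ y ∨ ∃ h : x = y, HEq f (C.id x))
  {X Z : SFunctor C} (f : SNat X Z)

theorem cast_self {A : Type} (h : A = A) (a : A) : cast h a = a := rfl

include hφ in
theorem no_up {a b : C.Obj} (g : C.Hom a b) (hab : φ a < φ b) : False := by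
  rcases hφ g with h | ⟨e, _⟩
  · omega
  · subst e; omega

include hφ in
theorem rank_le {a b : C.Obj} (g : C.Hom a b) : φ b ≤ φ a := by
  rcases hφ g with h | ⟨e, _⟩
  · omega
  · subst e; omega

include hφ in
theorem rank_lt_D {n : C.Obj} {w v : RedCoslice C n} (h : (RedCosliceCat C n).Hom w v)
    (hnid : NotId (RedCosliceCat C n) h) : φ v.1 < φ w.1 := by
  rcases hφ h.1 with hr | ⟨e, he⟩
  · exact hr
  · exfalso
    apply hnid
    obtain ⟨yw, fw, nfw⟩ := w
    obtain ⟨yv, fv, nfv⟩ := v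
    obtain ⟨h1, hc1⟩ := h
    dsimp at e he hc1 ⊢
    subst e
    have h1e : h1 = C.id yw := eq_of_heq he
    subst h1e
    rw [C.id_comp] at hc1
    subst hc1
    exact ⟨rfl, heq_of_eq (Subtype.ext rfl)⟩

end Main2
end ReedyAux
namespace ReedyAux
open TwoLevel

theorem wltk {C : SCat} {φ : C.Obj → ℕ}
    (hφ : ∀ ⦃x y : C.Obj⦄ (f : C.Hom x y), φ x > φ y ∨ ∃ h : x = y, HEq f (C.id x))
    {n : C.Obj} {k : ℕ} (hn : φ n = k) (w : RedCoslice C n) : φ w.1 < k :=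
  hn ▸ wlt hφ w

section Main3

variable {T : TLTT} {C : SCat} {φ : C.Obj → ℕ}
  {hφ : ∀ ⦃x y : C.Obj⦄ (f : C.Hom x y), φ x > φ y ∨ ∃ h : x = y, HEq f (C.id x)}
  {X Z : SFunctor C} {f : SNat X Z}

variable (hφ) (f) in
/-- The matching object at a rank-`k` object, relative to the partial construction. -/
def MatchL {k : ℕ} (P : Part T C φ hφ X Z f k) (n : C.Obj) (hn : φ n = k) : Type :=
  {m : ∀ w : RedCoslice C n, P.Yo w.1 (wltk hφ hn w) //
    ∀ ⦃w w' : RedCoslice C n⦄ (h : (RedCosliceCat C n).Hom w w'),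
      P.Ym h.1 (wltk hφ hn w) (wltk hφ hn w') (m w) = m w'}

variable (hφ) (f) in
/-- The pullback `M_n^Y ×_{M_n^Z} Z_n`, described componentwise. -/
def PBt {k : ℕ} (P : Part T C φ hφ X Z f k) (n : C.Obj) (hn : φ n = k) : Type :=
  {q : MatchL hφ f P n hn × Z.obj n //
    ∀ w, P.po w.1 (wltk hφ hn w) (q.1.1 w) = Z.map w.2.1 q.2}

variable (hφ) (f) in
/-- The canonical map `X_n → M_n^Y ×_{M_n^Z} Z_n`. -/
def cmap {k : ℕ} (P : Part T C φ hφ X Z f k) (n : C.Obj) (hn : φ n = k)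
    (x : X.obj n) : PBt hφ f P n hn :=
  ⟨(⟨fun w => P.io w.1 (wltk hφ hn w) (X.map w.2.1 x), by
      intro w w' h
      rw [P.io_nat, X.map_comp, h.2]⟩, f.app n x), by
    intro w
    rw [P.pio]
    exact (f.nat w.2.1 x).symm⟩

variable (hφ) in
def PhiRC {n : C.Obj} (w : RedCoslice C n) (v : RedCoslice C w.1) :
    RedCoslice (RedCosliceCat C n) w :=
  ⟨⟨v.1, ⟨C.comp v.2.1 w.2.1, notId_of_rank (φ := φ) _ (lt_trans (wlt hφ v) (wlt hφ w))⟩⟩,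
   ⟨⟨v.2.1, rfl⟩, notId_of_rank (C := RedCosliceCat C n) (φ := fun u => φ u.1) _ (wlt hφ v)⟩⟩

variable (hφ) in
def PsiRC {n : C.Obj} (w : RedCoslice C n) (u : RedCoslice (RedCosliceCat C n) w) :
    RedCoslice C w.1 :=
  ⟨u.1.1, ⟨u.2.1.1, notId_of_rank _ (rank_lt_D hφ u.2.1 u.2.2)⟩⟩

theorem PhiPsi {n : C.Obj} (w : RedCoslice C n) (u : RedCoslice (RedCosliceCat C n) w) :
    PhiRC hφ w (PsiRC hφ w u) = u := by
  obtain ⟨⟨y1, g1, ng1⟩, ⟨h1, hc1⟩, nid1⟩ := u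
  change C.Hom w.1 y1 at h1
  change C.comp h1 w.2.1 = g1 at hc1
  revert nid1
  subst hc1
  intro nid1
  rfl

variable (hφ) (f) in
/-- The pointwise-fibre diagram over the reduced coslice. -/
def GzF {k : ℕ} (P : Part T C φ hφ X Z f k) (n : C.Obj) (hn : φ n = k) (z : Z.obj n) :
    SFunctor (RedCosliceCat C n) where
  obj w := {y : P.Yo w.1 (wltk hφ hn w) // P.po w.1 (wltk hφ hn w) y = Z.map w.2.1 z}
  map {w w'} h y := ⟨P.Ym h.1 (wltk hφ hn w) (wltk hφ hn w') y.1, by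
    rw [← P.po_nat, y.2, Z.map_comp, h.2]⟩
  map_id y := Subtype.ext (P.Ym_id _ _ _)
  map_comp g h y := Subtype.ext (P.Ym_comp _ _ _ _ _ _)

theorem reedy_GzF {k : ℕ} (P : Part T C φ hφ X Z f k) (n : C.Obj) (hn : φ n = k)
    (z : Z.obj n) : ReedyFibrant T (GzF hφ f P n hn z) := by
  intro w μ
  have hw : φ w.1 < k := wltk hφ hn w
  have mcompat : ∀ ⦃v v' : RedCoslice C w.1⦄ (h : (RedCosliceCat C w.1).Hom v v'),
      P.Ym h.1 (lt_trans (wlt hφ v) hw) (lt_trans (wlt hφ v') hw)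
        ((μ.1 (PhiRC hφ w v)).1) = (μ.1 (PhiRC hφ w v')).1 := by
    intro v v' h
    have h2 := congrArg Subtype.val (μ.2
      (⟨⟨h.1, by dsimp [PhiRC]; rw [← C.assoc, h.2]⟩, Subtype.ext h.2⟩ :
        (RedCosliceCat (RedCosliceCat C n) w).Hom (PhiRC hφ w v) (PhiRC hφ w v')))
    exact h2
  have mz : ∀ v : RedCoslice C w.1, P.po v.1 (lt_trans (wlt hφ v) hw)
      ((μ.1 (PhiRC hφ w v)).1) = Z.map v.2.1 (Z.map w.2.1 z) := by
    intro v
    rw [Z.map_comp]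
    exact (μ.1 (PhiRC hφ w v)).2
  have hF := P.hfib w.1 hw (fun v => (μ.1 (PhiRC hφ w v)).1) mcompat (Z.map w.2.1 z) mz
  refine essFib_of_equiv ?_ hF
  exact {
    toFun := fun γ => ⟨γ.1.1, fun v =>
        congrArg Subtype.val (congrFun (congrArg Subtype.val γ.2) (PhiRC hφ w v)), γ.1.2⟩
    invFun := fun y => ⟨⟨y.1, y.2.2⟩, by
        apply Subtype.ext; funext u
        apply Subtype.ext
        have h1 := y.2.1 (PsiRC hφ w u)
        rw [← PhiPsi (hφ := hφ) w u]
        exact h1⟩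
    left_inv := fun γ => Subtype.ext (Subtype.ext rfl)
    right_inv := fun y => rfl }

theorem essFib_PBt {k : ℕ} (P : Part T C φ hφ X Z f k) (hAdm : Admissible T C)
    (hZ : ∀ n, T.Fib (Z.obj n)) (n : C.Obj) (hn : φ n = k) :
    EssFib T (PBt hφ f P n hn) := by
  have key : ∀ z : Z.obj n, EssFib T (SLimit (RedCosliceCat C n) (GzF hφ f P n hn z)) :=
    fun z => hAdm n _ (reedy_GzF P n hn z)
  refine essFib_of_equiv ?_ (essFib_sigma (hZ n) key)
  exact {
    toFun := fun q => ⟨q.1.2, ⟨fun w => ⟨q.1.1.1 w, q.2 w⟩,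
      fun w w' h => Subtype.ext (q.1.1.2 h)⟩⟩
    invFun := fun s => ⟨(⟨fun w => (s.2.1 w).1,
      fun w w' h => congrArg Subtype.val (s.2.2 h)⟩, s.1), fun w => (s.2.1 w).2⟩
    left_inv := fun q => rfl
    right_inv := fun s => rfl }

end Main3
end ReedyAux
namespace ReedyAux
open TwoLevel

theorem cast_symm {A B : Type} (h : A = B) {a : A} {b : B} :
    cast h a = b ↔ a = cast h.symm b := by subst h; exact Iff.rfl

section Main4

variable {T : TLTT} {C : SCat} {φ : C.Obj → ℕ}
  {hφ : ∀ ⦃x y : C.Obj⦄ (f : C.Hom x y), φ x > φ y ∨ ∃ h : x = y, HEq f (C.id x)}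
  {X Z : SFunctor C} {f : SNat X Z}
  (hAdm : Admissible T C) (hZ : ∀ n, T.Fib (Z.obj n)) (hX : ∀ n, T.Fib (X.obj n))
  {k : ℕ} (P : Part T C φ hφ X Z f k)

/-- The chosen fibrant replacement of the pullback. -/
noncomputable def BnT (n : C.Obj) (hn : φ n = k) : Type :=
  (essFib_PBt P hAdm hZ n hn).choose

theorem fib_BnT (n : C.Obj) (hn : φ n = k) : T.Fib (BnT hAdm hZ P n hn) :=
  (essFib_PBt P hAdm hZ n hn).choose_spec.1

noncomputable def eB (n : C.Obj) (hn : φ n = k) :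
    PBt hφ f P n hn ≃ BnT hAdm hZ P n hn :=
  Classical.choice (essFib_PBt P hAdm hZ n hn).choose_spec.2

/-- The new level: mapping cocylinder. -/
noncomputable def NewT (n : C.Obj) (hn : φ n = k) : Type :=
  Σ _x : X.obj n, Σ b : BnT hAdm hZ P n hn,
    T.Id (BnT hAdm hZ P n hn) (eB hAdm hZ P n hn (cmap hφ f P n hn _x)) b

include hX in
theorem fib_NewT (n : C.Obj) (hn : φ n = k) : T.Fib (NewT hAdm hZ P n hn) :=
  T.fibSigma (hX n) fun _x => T.fibSigma (fib_BnT hAdm hZ P n hn)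
    fun _b => T.fibId (fib_BnT hAdm hZ P n hn) _ _

noncomputable def Yo' (n : C.Obj) (h : φ n < k + 1) : Type :=
  if h' : φ n < k then P.Yo n h' else NewT hAdm hZ P n (by omega)

theorem Yo'_old (n : C.Obj) (h : φ n < k + 1) (h' : φ n < k) :
    Yo' hAdm hZ P n h = P.Yo n h' := dif_pos h'

theorem Yo'_new (n : C.Obj) (h : φ n < k + 1) (h' : ¬ φ n < k) :
    Yo' hAdm hZ P n h = NewT hAdm hZ P n (by omega) := dif_neg h'

noncomputable def Ym' {a b : C.Obj} (g : C.Hom a b) (ha : φ a < k + 1) (hb : φ b < k + 1)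
    (x : Yo' hAdm hZ P a ha) : Yo' hAdm hZ P b hb :=
  if ha' : φ a < k then
    if hb' : φ b < k then
      cast (Yo'_old hAdm hZ P b hb hb').symm
        (P.Ym g ha' hb' (cast (Yo'_old hAdm hZ P a ha ha') x))
    else (no_up hφ g (by omega)).elim
  else
    if hb' : φ b < k then
      cast (Yo'_old hAdm hZ P b hb hb').symm
        (((eB hAdm hZ P a (by omega)).symm
            ((cast (Yo'_new hAdm hZ P a ha ha') x).2.1)).1.1.1
          ⟨b, g, notId_of_rank (φ := φ) g (by omega)⟩)
    else
      cast (show Yo' hAdm hZ P a ha = Yo' hAdm hZ P b hb by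
        rcases (hφ g).resolve_left (by omega) with ⟨e, _⟩
        subst e; rfl) x

noncomputable def io' (n : C.Obj) (h : φ n < k + 1) (x : X.obj n) : Yo' hAdm hZ P n h :=
  if h' : φ n < k then cast (Yo'_old hAdm hZ P n h h').symm (P.io n h' x)
  else cast (Yo'_new hAdm hZ P n h h').symm
    ⟨x, eB hAdm hZ P n (by omega) (cmap hφ f P n (by omega) x), T.idRefl _⟩

noncomputable def po' (n : C.Obj) (h : φ n < k + 1) (y : Yo' hAdm hZ P n h) : Z.obj n :=
  if h' : φ n < k then P.po n h' (cast (Yo'_old hAdm hZ P n h h') y)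
  else ((eB hAdm hZ P n (by omega)).symm
    ((cast (Yo'_new hAdm hZ P n h h') y).2.1)).1.2

end Main4
end ReedyAux
namespace ReedyAux
open TwoLevel

/-- Extracting the fibre over `b₀` of the second component of a telescope. -/
def sigmaFiberEquiv {A B : Type} {H : A → B → Type} (b₀ : B) :
    {s : Σ a : A, Σ b : B, H a b // s.2.1 = b₀} ≃ Σ a : A, H a b₀ where
  toFun s := ⟨s.1.1, cast (congrArg (H s.1.1) s.2) s.1.2.2⟩
  invFun t := ⟨⟨t.1, b₀, t.2⟩, rfl⟩
  left_inv := by rintro ⟨⟨x, b, hb⟩, hE⟩; dsimp only at hE; subst hE; rfl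
  right_inv t := rfl

section Main5

variable {T : TLTT} {C : SCat} {φ : C.Obj → ℕ}
  {hφ : ∀ ⦃x y : C.Obj⦄ (f : C.Hom x y), φ x > φ y ∨ ∃ h : x = y, HEq f (C.id x)}
  {X Z : SFunctor C} {f : SNat X Z}
  (hAdm : Admissible T C) (hZ : ∀ n, T.Fib (Z.obj n)) (hX : ∀ n, T.Fib (X.obj n))
  {k : ℕ} (P : Part T C φ hφ X Z f k)

theorem Ym'_id (n : C.Obj) (ha hb : φ n < k + 1) (x : Yo' hAdm hZ P n ha) :
    Ym' hAdm hZ P (C.id n) ha hb x = x := by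
  by_cases h' : φ n < k
  · simp only [Ym', dif_pos h', P.Ym_id, cast_cast, cast_self]
  · simp only [Ym', dif_neg h', cast_self]

theorem Ym'_comp {a b c : C.Obj} (g : C.Hom b c) (g' : C.Hom a b)
    (ha : φ a < k + 1) (hb : φ b < k + 1) (hc : φ c < k + 1) (x : Yo' hAdm hZ P a ha) :
    Ym' hAdm hZ P g hb hc (Ym' hAdm hZ P g' ha hb x) =
      Ym' hAdm hZ P (C.comp g g') ha hc x := by
  by_cases hb' : φ b < k
  · by_cases ha' : φ a < k
    · by_cases hc' : φ c < k
      · simp only [Ym', dif_pos ha', dif_pos hb', dif_pos hc', cast_cast, cast_self,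
          P.Ym_comp]
      · exact (no_up hφ g (by omega)).elim
    · by_cases hc' : φ c < k
      · simp only [Ym', dif_pos hb', dif_pos hc', dif_neg ha', cast_cast, cast_self]
        exact congrArg (cast (Yo'_old hAdm hZ P c hc hc').symm)
          (((eB hAdm hZ P a (by omega)).symm
              ((cast (Yo'_new hAdm hZ P a ha ha') x).2.1)).1.1.2
            (w := ⟨b, g', notId_of_rank (φ := φ) g' (by omega)⟩)
            (w' := ⟨c, C.comp g g', notId_of_rank (φ := φ) (C.comp g g') (by omega)⟩)
            ⟨g, rfl⟩)
      · exact (no_up hφ g (by omega)).elim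
  · by_cases ha' : φ a < k
    · exact (no_up hφ g' (by omega)).elim
    · rcases (hφ g').resolve_left (by omega) with ⟨e, he⟩
      subst e
      have hg' : g' = C.id a := eq_of_heq he
      subst hg'
      rw [C.comp_id, Ym'_id hAdm hZ P a ha hb]

theorem io'_nat {a b : C.Obj} (g : C.Hom a b) (ha : φ a < k + 1) (hb : φ b < k + 1)
    (x : X.obj a) :
    Ym' hAdm hZ P g ha hb (io' hAdm hZ P a ha x) = io' hAdm hZ P b hb (X.map g x) := by
  by_cases ha' : φ a < k
  · by_cases hb' : φ b < k
    · simp only [Ym', io', dif_pos ha', dif_pos hb', cast_cast, cast_self, P.io_nat]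
    · exact (no_up hφ g (by omega)).elim
  · by_cases hb' : φ b < k
    · simp only [Ym', io', dif_pos hb']
      rw [dif_neg ha']
      rw [dif_neg ha']
      erw [cast_cast]
      erw [cast_self, Equiv.symm_apply_apply]
      rfl
    · rcases (hφ g).resolve_left (by omega) with ⟨e, he⟩
      subst e
      have hg : g = C.id a := eq_of_heq he
      subst hg
      rw [X.map_id]
      exact Ym'_id hAdm hZ P a ha hb _
  -- final case handled above

theorem po'_nat {a b : C.Obj} (g : C.Hom a b) (ha : φ a < k + 1) (hb : φ b < k + 1)
    (y : Yo' hAdm hZ P a ha) :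
    Z.map g (po' hAdm hZ P a ha y) = po' hAdm hZ P b hb (Ym' hAdm hZ P g ha hb y) := by
  by_cases ha' : φ a < k
  · by_cases hb' : φ b < k
    · simp only [po', Ym', dif_pos ha', dif_pos hb', cast_cast, cast_self]
      exact P.po_nat g ha' hb' _
    · exact (no_up hφ g (by omega)).elim
  · by_cases hb' : φ b < k
    · simp only [po', Ym', dif_neg ha', dif_pos hb', cast_cast, cast_self]
      exact (((eB hAdm hZ P a (by omega)).symm
          ((cast (Yo'_new hAdm hZ P a ha ha') y).2.1)).2
        ⟨b, g, notId_of_rank (φ := φ) g (by omega)⟩).symm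
    · rcases (hφ g).resolve_left (by omega) with ⟨e, he⟩
      subst e
      have hg : g = C.id a := eq_of_heq he
      subst hg
      rw [Z.map_id, Ym'_id hAdm hZ P a ha hb]

theorem pio' (n : C.Obj) (h : φ n < k + 1) (x : X.obj n) :
    po' hAdm hZ P n h (io' hAdm hZ P n h x) = f.app n x := by
  by_cases h' : φ n < k
  · simp only [po', io', dif_pos h', cast_cast, cast_self, P.pio]
  · simp only [po', io', dif_neg h']
    erw [dif_neg h', cast_cast]
    erw [cast_self, Equiv.symm_apply_apply]
    rfl

include hX in
theorem hYfib' (n : C.Obj) (h : φ n < k + 1) : T.Fib (Yo' hAdm hZ P n h) := by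
  by_cases h' : φ n < k
  · exact fib_eq (Yo'_old hAdm hZ P n h h').symm (P.hYfib n h')
  · exact fib_eq (Yo'_new hAdm hZ P n h h').symm (fib_NewT hAdm hZ hX P n (by omega))

include hX in
theorem hheq' (n : C.Obj) (h : φ n < k + 1) : IsHEquiv T (io' hAdm hZ P n h) := by
  by_cases h' : φ n < k
  · have he : io' hAdm hZ P n h
        = fun x => cast (Yo'_old hAdm hZ P n h h').symm (P.io n h' x) := by
      funext x; simp only [io', dif_pos h']
    rw [he]
    exact hequiv_cast _ (P.hheq n h')
  · have hnk : φ n = k := by omega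
    have he : io' hAdm hZ P n h = fun x => cast (Yo'_new hAdm hZ P n h h').symm
        (⟨x, eB hAdm hZ P n hnk (cmap hφ f P n hnk x), T.idRefl _⟩
          : NewT hAdm hZ P n hnk) := by
      funext x; simp only [io', dif_neg h']
    rw [he]
    refine hequiv_cast _ ⟨fun y => y.1, fun x => ⟨T.idRefl x⟩, ?_⟩
    rintro ⟨x, b, hb⟩
    exact ⟨T.idElim (eB hAdm hZ P n hnk (cmap hφ f P n hnk x))
      (fun b hb => T.Id (NewT hAdm hZ P n hnk)
        ⟨x, eB hAdm hZ P n hnk (cmap hφ f P n hnk x), T.idRefl _⟩ ⟨x, b, hb⟩)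
      (fun b hb => T.fibId (fib_NewT hAdm hZ hX P n hnk) _ _)
      (T.idRefl _) b hb⟩

end Main5
end ReedyAux
namespace ReedyAux
open TwoLevel

section Main6

variable {T : TLTT} {C : SCat} {φ : C.Obj → ℕ}
  {hφ : ∀ ⦃x y : C.Obj⦄ (f : C.Hom x y), φ x > φ y ∨ ∃ h : x = y, HEq f (C.id x)}
  {X Z : SFunctor C} {f : SNat X Z}
  (hAdm : Admissible T C) (hZ : ∀ n, T.Fib (Z.obj n)) (hX : ∀ n, T.Fib (X.obj n))
  {k : ℕ} (P : Part T C φ hφ X Z f k)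

include hX in
theorem hfib' (n : C.Obj) (hn : φ n < k + 1)
    (m : ∀ w : RedCoslice C n, Yo' hAdm hZ P w.1 (lt_trans (wlt hφ w) hn))
    (mc : ∀ ⦃w w' : RedCoslice C n⦄ (h : (RedCosliceCat C n).Hom w w'),
      Ym' hAdm hZ P h.1 (lt_trans (wlt hφ w) hn) (lt_trans (wlt hφ w') hn) (m w) = m w')
    (z : Z.obj n)
    (mz : ∀ w, po' hAdm hZ P w.1 (lt_trans (wlt hφ w) hn) (m w) = Z.map w.2.1 z) :
    EssFib T {y : Yo' hAdm hZ P n hn //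
      (∀ w, Ym' hAdm hZ P w.2.1 hn (lt_trans (wlt hφ w) hn) y = m w) ∧
        po' hAdm hZ P n hn y = z} := by
  have hww : ∀ w : RedCoslice C n, φ w.1 < k := fun w => by
    have := wlt hφ w; omega
  have mcOld : ∀ ⦃w w' : RedCoslice C n⦄ (h : (RedCosliceCat C n).Hom w w'),
      P.Ym h.1 (hww w) (hww w')
        (cast (Yo'_old hAdm hZ P w.1 (lt_trans (wlt hφ w) hn) (hww w)) (m w)) =
        cast (Yo'_old hAdm hZ P w'.1 (lt_trans (wlt hφ w') hn) (hww w')) (m w') := by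
    intro w w' h
    have h2 := mc h
    simp only [Ym', dif_pos (hww w), dif_pos (hww w')] at h2
    rw [cast_symm] at h2
    exact h2
  have mzOld : ∀ w : RedCoslice C n, P.po w.1 (hww w)
      (cast (Yo'_old hAdm hZ P w.1 (lt_trans (wlt hφ w) hn) (hww w)) (m w)) =
      Z.map w.2.1 z := by
    intro w
    have h2 := mz w
    simp only [po', dif_pos (hww w)] at h2
    exact h2
  by_cases hn' : φ n < k
  · have hF := P.hfib n hn'
      (fun w => cast (Yo'_old hAdm hZ P w.1 (lt_trans (wlt hφ w) hn) (hww w)) (m w))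
      mcOld z mzOld
    refine essFib_of_equiv
      (Equiv.subtypeEquiv (Equiv.cast (Yo'_old hAdm hZ P n hn hn')) ?_) hF
    intro y
    constructor
    · rintro ⟨h1, h2⟩
      refine ⟨fun w => ?_, ?_⟩
      · have h3 := h1 w
        simp only [Ym', dif_pos hn', dif_pos (hww w)] at h3
        rw [cast_symm] at h3
        exact h3
      · have h3 := h2
        simp only [po', dif_pos hn'] at h3
        exact h3
    · rintro ⟨h1, h2⟩
      refine ⟨fun w => ?_, ?_⟩
      · simp only [Ym', dif_pos hn', dif_pos (hww w)]
        rw [cast_symm]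
        exact h1 w
      · simp only [po', dif_pos hn']
        exact h2
  · have hnk : φ n = k := by omega
    have hF : EssFib T (Σ x : X.obj n,
        T.Id (BnT hAdm hZ P n hnk) (eB hAdm hZ P n hnk (cmap hφ f P n hnk x))
          (eB hAdm hZ P n hnk
            (⟨(⟨fun w => cast (Yo'_old hAdm hZ P w.1 (lt_trans (wlt hφ w) hn) (hww w))
                (m w), mcOld⟩, z), mzOld⟩ : PBt hφ f P n hnk))) :=
      essFib_of_fib (T.fibSigma (hX n) fun x => T.fibId (fib_BnT hAdm hZ P n hnk) _ _)
    refine essFib_of_equiv (Equiv.trans (Equiv.subtypeEquiv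
      (Equiv.cast (Yo'_new hAdm hZ P n hn hn')) ?_) (sigmaFiberEquiv _)) hF
    intro y
    constructor
    · rintro ⟨h1, h2⟩
      have hq : (eB hAdm hZ P n hnk).symm ((cast (Yo'_new hAdm hZ P n hn hn') y).2.1)
          = ⟨(⟨fun w => cast (Yo'_old hAdm hZ P w.1 (lt_trans (wlt hφ w) hn) (hww w))
                (m w), mcOld⟩, z), mzOld⟩ := by
        apply Subtype.ext
        apply Prod.ext
        · apply Subtype.ext
          funext w
          have h3 := h1 w
          simp only [Ym', dif_neg hn', dif_pos (hww w)] at h3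
          rw [cast_symm] at h3
          exact h3
        · have h3 := h2
          simp only [po', dif_neg hn'] at h3
          exact h3
      show (cast (Yo'_new hAdm hZ P n hn hn') y).2.1 = _
      rw [← hq, Equiv.apply_symm_apply]
    · intro hb
      have hb' : (cast (Yo'_new hAdm hZ P n hn hn') y).2.1
          = eB hAdm hZ P n hnk
            (⟨(⟨fun w => cast (Yo'_old hAdm hZ P w.1 (lt_trans (wlt hφ w) hn) (hww w))
                (m w), mcOld⟩, z), mzOld⟩ : PBt hφ f P n hnk) := hb
      have hq : (eB hAdm hZ P n hnk).symm ((cast (Yo'_new hAdm hZ P n hn hn') y).2.1)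
          = ⟨(⟨fun w => cast (Yo'_old hAdm hZ P w.1 (lt_trans (wlt hφ w) hn) (hww w))
                (m w), mcOld⟩, z), mzOld⟩ := by
        erw [hb', Equiv.symm_apply_apply]
      refine ⟨fun w => ?_, ?_⟩
      · simp only [Ym', dif_neg hn', dif_pos (hww w)]
        rw [cast_symm]
        exact congrArg (fun q : PBt hφ f P n hnk => q.1.1.1 w) hq
      · simp only [po', dif_neg hn']
        exact congrArg (fun q : PBt hφ f P n hnk => q.1.2) hq

/-- The extension step. -/
noncomputable def succ : Part T C φ hφ X Z f (k + 1) where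
  Yo := Yo' hAdm hZ P
  Ym := fun g ha hb x => Ym' hAdm hZ P g ha hb x
  Ym_id := fun n h x => Ym'_id hAdm hZ P n h h x
  Ym_comp := fun g g' ha hb hc x => Ym'_comp hAdm hZ P g g' ha hb hc x
  hYfib := hYfib' hAdm hZ hX P
  io := io' hAdm hZ P
  po := po' hAdm hZ P
  io_nat := fun g ha hb x => io'_nat hAdm hZ P g ha hb x
  po_nat := fun g ha hb y => po'_nat hAdm hZ P g ha hb y
  pio := pio' hAdm hZ P
  hheq := hheq' hAdm hZ hX P
  hfib := hfib' hAdm hZ hX P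

end Main6
end ReedyAux
namespace ReedyAux
open TwoLevel

section Main7

variable {T : TLTT} {C : SCat} {φ : C.Obj → ℕ}
  {hφ : ∀ ⦃x y : C.Obj⦄ (f : C.Hom x y), φ x > φ y ∨ ∃ h : x = y, HEq f (C.id x)}
  {X Z : SFunctor C} {f : SNat X Z}
  (hAdm : Admissible T C) (hZ : ∀ n, T.Fib (Z.obj n)) (hX : ∀ n, T.Fib (X.obj n))

variable (T C φ hφ X Z f) in
def zeroPart : Part T C φ hφ X Z f 0 where
  Yo := fun _ h => absurd h (Nat.not_lt_zero _)
  Ym := fun _ ha => absurd ha (Nat.not_lt_zero _)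
  Ym_id := fun _ h => absurd h (Nat.not_lt_zero _)
  Ym_comp := fun _ _ ha => absurd ha (Nat.not_lt_zero _)
  hYfib := fun _ h => absurd h (Nat.not_lt_zero _)
  io := fun _ h => absurd h (Nat.not_lt_zero _)
  po := fun _ h => absurd h (Nat.not_lt_zero _)
  io_nat := fun _ ha => absurd ha (Nat.not_lt_zero _)
  po_nat := fun _ ha => absurd ha (Nat.not_lt_zero _)
  pio := fun _ h => absurd h (Nat.not_lt_zero _)
  hheq := fun _ h => absurd h (Nat.not_lt_zero _)
  hfib := fun _ h => absurd h (Nat.not_lt_zero _)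

noncomputable def stages : ∀ k : ℕ, Part T C φ hφ X Z f k
  | 0 => zeroPart T C φ hφ X Z f
  | k + 1 => succ hAdm hZ hX (stages k)

theorem stages_Yo_stable : ∀ {k k' : ℕ}, k ≤ k' → ∀ (n : C.Obj) (h : φ n < k)
    (h' : φ n < k'), (stages (hφ := hφ) (f := f) hAdm hZ hX k').Yo n h' = (stages (hφ := hφ) (f := f) hAdm hZ hX k).Yo n h := by
  intro k k'
  induction k' with
  | zero => intro _ n _ h'; exact absurd h' (Nat.not_lt_zero _)
  | succ k' ih =>
    intro hkk n h h'
    by_cases hk : k = k' + 1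
    · subst hk; rfl
    · have hnk : φ n < k' := by omega
      have e1 : (stages (hφ := hφ) (f := f) hAdm hZ hX (k' + 1)).Yo n h'
          = (stages (hφ := hφ) (f := f) hAdm hZ hX k').Yo n hnk :=
        Yo'_old hAdm hZ (stages (hφ := hφ) (f := f) hAdm hZ hX k') n h' hnk
      rw [e1]
      exact ih (by omega) n h hnk

theorem stages_Ym_stable : ∀ {k k' : ℕ} (hkk : k ≤ k') {a b : C.Obj} (g : C.Hom a b)
    (ha : φ a < k) (hb : φ b < k) (ha' : φ a < k') (hb' : φ b < k')
    (x : (stages (hφ := hφ) (f := f) hAdm hZ hX k').Yo a ha'),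
    (stages (hφ := hφ) (f := f) hAdm hZ hX k).Ym g ha hb
      (cast (stages_Yo_stable hAdm hZ hX hkk a ha ha') x)
      = cast (stages_Yo_stable hAdm hZ hX hkk b hb hb')
        ((stages (hφ := hφ) (f := f) hAdm hZ hX k').Ym g ha' hb' x) := by
  intro k k'
  induction k' with
  | zero => intro _ _ _ _ _ _ ha'; exact absurd ha' (Nat.not_lt_zero _)
  | succ k' ih =>
    intro hkk a b g ha hb ha' hb' x
    by_cases hk : k = k' + 1
    · subst hk
      simp only [cast_self]
    · have hak : φ a < k' := by omega
      have hbk : φ b < k' := by omega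
      have e2 : (stages (hφ := hφ) (f := f) hAdm hZ hX (k' + 1)).Ym g ha' hb' x
          = cast (Yo'_old hAdm hZ (stages (hφ := hφ) (f := f) hAdm hZ hX k') b hb' hbk).symm
            ((stages (hφ := hφ) (f := f) hAdm hZ hX k').Ym g hak hbk
              (cast (Yo'_old hAdm hZ (stages (hφ := hφ) (f := f) hAdm hZ hX k') a ha' hak) x)) := by
        show Ym' hAdm hZ (stages (hφ := hφ) (f := f) hAdm hZ hX k') g ha' hb' x = _
        simp only [Ym', dif_pos hak, dif_pos hbk]
      have e3 := ih (show k ≤ k' by omega) g ha hb hak hbk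
        (cast (Yo'_old hAdm hZ (stages (hφ := hφ) (f := f) hAdm hZ hX k') a ha' hak) x)
      erw [cast_cast] at e3
      erw [e2, cast_cast]
      exact e3

theorem stages_io_stable : ∀ {k k' : ℕ} (hkk : k ≤ k') (n : C.Obj) (h : φ n < k)
    (h' : φ n < k') (x : X.obj n),
    (stages (hφ := hφ) (f := f) hAdm hZ hX k').io n h' x
      = cast (stages_Yo_stable hAdm hZ hX hkk n h h').symm
        ((stages (hφ := hφ) (f := f) hAdm hZ hX k).io n h x) := by
  intro k k'
  induction k' with
  | zero => intro _ n _ h'; exact absurd h' (Nat.not_lt_zero _)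
  | succ k' ih =>
    intro hkk n h h' x
    by_cases hk : k = k' + 1
    · subst hk; simp only [cast_self]
    · have hnk : φ n < k' := by omega
      have e2 : (stages (hφ := hφ) (f := f) hAdm hZ hX (k' + 1)).io n h' x
          = cast (Yo'_old hAdm hZ (stages (hφ := hφ) (f := f) hAdm hZ hX k') n h' hnk).symm
            ((stages (hφ := hφ) (f := f) hAdm hZ hX k').io n hnk x) := by
        show io' hAdm hZ (stages (hφ := hφ) (f := f) hAdm hZ hX k') n h' x = _
        simp only [io', dif_pos hnk]
      rw [e2, ih (show k ≤ k' by omega) n h hnk x, cast_cast]; rfl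

theorem stages_po_stable : ∀ {k k' : ℕ} (hkk : k ≤ k') (n : C.Obj) (h : φ n < k)
    (h' : φ n < k') (x : (stages (hφ := hφ) (f := f) hAdm hZ hX k').Yo n h'),
    (stages (hφ := hφ) (f := f) hAdm hZ hX k').po n h' x
      = (stages (hφ := hφ) (f := f) hAdm hZ hX k).po n h
        (cast (stages_Yo_stable hAdm hZ hX hkk n h h') x) := by
  intro k k'
  induction k' with
  | zero => intro _ n _ h'; exact absurd h' (Nat.not_lt_zero _)
  | succ k' ih =>
    intro hkk n h h' x
    by_cases hk : k = k' + 1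
    · subst hk; simp only [cast_self]
    · have hnk : φ n < k' := by omega
      have e2 : (stages (hφ := hφ) (f := f) hAdm hZ hX (k' + 1)).po n h' x
          = (stages (hφ := hφ) (f := f) hAdm hZ hX k').po n hnk
            (cast (Yo'_old hAdm hZ (stages (hφ := hφ) (f := f) hAdm hZ hX k') n h' hnk) x) := by
        show po' hAdm hZ (stages (hφ := hφ) (f := f) hAdm hZ hX k') n h' x = _
        simp only [po', dif_pos hnk]
      erw [e2, ih (show k ≤ k' by omega) n h hnk, cast_cast]; rfl

end Main7
end ReedyAux
namespace ReedyAux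
open TwoLevel

section Main8

variable {T : TLTT} {C : SCat} {φ : C.Obj → ℕ}
  {hφ : ∀ ⦃x y : C.Obj⦄ (f : C.Hom x y), φ x > φ y ∨ ∃ h : x = y, HEq f (C.id x)}
  {X Z : SFunctor C} {f : SNat X Z}
  (hAdm : Admissible T C) (hZ : ∀ n, T.Fib (Z.obj n)) (hX : ∀ n, T.Fib (X.obj n))

local notation "𝕊" => stages (T := T) (C := C) (φ := φ) (hφ := hφ) (X := X) (Z := Z)
  (f := f) hAdm hZ hX
local notation "𝕐" => stages_Yo_stable (T := T) (C := C) (φ := φ) (hφ := hφ) (X := X)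
  (Z := Z) (f := f) hAdm hZ hX

noncomputable def Yinf : SFunctor C where
  obj n := (𝕊 (φ n + 1)).Yo n (Nat.lt_succ_self _)
  map {a b} g x :=
    cast (𝕐 (show φ b + 1 ≤ φ a + 1 by have := rank_le hφ g; omega) b
        (Nat.lt_succ_self _) (show φ b < φ a + 1 by have := rank_le hφ g; omega))
      ((𝕊 (φ a + 1)).Ym g (Nat.lt_succ_self _)
        (show φ b < φ a + 1 by have := rank_le hφ g; omega) x)
  map_id {n} x := by
    show cast (𝕐 (show φ n + 1 ≤ φ n + 1 by have := rank_le hφ (C.id n); omega) n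
        (Nat.lt_succ_self _) (show φ n < φ n + 1 by have := rank_le hφ (C.id n); omega))
      ((𝕊 (φ n + 1)).Ym (C.id n) (Nat.lt_succ_self _)
        (show φ n < φ n + 1 by have := rank_le hφ (C.id n); omega) x) = x
    rw [(𝕊 (φ n + 1)).Ym_id]
    exact cast_self _ _
  map_comp {a b c} g g' x := by
    have hba : φ b + 1 ≤ φ a + 1 := by have := rank_le hφ g'; omega
    have hcb : φ c < φ b + 1 := by have := rank_le hφ g; omega
    have hca : φ c < φ a + 1 := by
      have h1 := rank_le hφ g; have h2 := rank_le hφ g'; omega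
    have h1 := stages_Ym_stable (hφ := hφ) (f := f) hAdm hZ hX hba g
      (Nat.lt_succ_self _) hcb
      (show φ b < φ a + 1 by omega) hca
      ((𝕊 (φ a + 1)).Ym g' (Nat.lt_succ_self _) (show φ b < φ a + 1 by omega) x)
    refine Eq.trans (congrArg (cast _) h1) ?_
    rw [cast_cast, (𝕊 (φ a + 1)).Ym_comp]

local notation "𝕐∞" => Yinf (T := T) (C := C) (φ := φ) (hφ := hφ) (X := X) (Z := Z)
  (f := f) hAdm hZ hX

noncomputable def iInf : SNat X 𝕐∞ where
  app n x := (𝕊 (φ n + 1)).io n (Nat.lt_succ_self _) x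
  nat {a b} g x := by
    show cast (𝕐 (show φ b + 1 ≤ φ a + 1 by have := rank_le hφ g; omega) b
        (Nat.lt_succ_self _) (show φ b < φ a + 1 by have := rank_le hφ g; omega))
      ((𝕊 (φ a + 1)).Ym g (Nat.lt_succ_self _)
        (show φ b < φ a + 1 by have := rank_le hφ g; omega)
        ((𝕊 (φ a + 1)).io a (Nat.lt_succ_self _) x)) = _
    rw [(𝕊 (φ a + 1)).io_nat, stages_io_stable (hφ := hφ) (f := f) hAdm hZ hX
      (show φ b + 1 ≤ φ a + 1 by have := rank_le hφ g; omega) b (Nat.lt_succ_self _)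
      (show φ b < φ a + 1 by have := rank_le hφ g; omega), cast_cast]
    exact cast_self _ _

noncomputable def pInf : SNat 𝕐∞ Z where
  app n y := (𝕊 (φ n + 1)).po n (Nat.lt_succ_self _) y
  nat {a b} g y := by
    show _ = (𝕊 (φ b + 1)).po b (Nat.lt_succ_self _)
      (cast (𝕐 (show φ b + 1 ≤ φ a + 1 by have := rank_le hφ g; omega) b
          (Nat.lt_succ_self _) (show φ b < φ a + 1 by have := rank_le hφ g; omega))
        ((𝕊 (φ a + 1)).Ym g (Nat.lt_succ_self _)
          (show φ b < φ a + 1 by have := rank_le hφ g; omega) y))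
    rw [← stages_po_stable (hφ := hφ) (f := f) hAdm hZ hX
      (show φ b + 1 ≤ φ a + 1 by have := rank_le hφ g; omega) b (Nat.lt_succ_self _)
      (show φ b < φ a + 1 by have := rank_le hφ g; omega)]
    exact (𝕊 (φ a + 1)).po_nat g _ _ y

include hX in
theorem reedy_pInf : IsReedyFibration T (pInf (φ := φ) (hφ := hφ) (f := f) hAdm hZ hX) := by
  intro n q0
  obtain ⟨⟨mm, z⟩, cond⟩ := q0
  have hws : ∀ w : RedCoslice C n, φ w.1 + 1 ≤ φ n + 1 := fun w => by
    have := wlt hφ w; omega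
  have hw1 : ∀ w : RedCoslice C n, φ w.1 < φ n + 1 := fun w => by
    have := wlt hφ w; omega
  have mc : ∀ ⦃w w' : RedCoslice C n⦄ (h : (RedCosliceCat C n).Hom w w'),
      (𝕊 (φ n + 1)).Ym h.1 (hw1 w) (hw1 w')
        (cast (𝕐 (hws w) w.1 (Nat.lt_succ_self _) (hw1 w)).symm (mm.1 w))
      = cast (𝕐 (hws w') w'.1 (Nat.lt_succ_self _) (hw1 w')).symm (mm.1 w') := by
    intro w w' h
    have hww' : φ w'.1 < φ w.1 + 1 := by have := rank_le hφ h.1; omega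
    have h3 := stages_Ym_stable (hφ := hφ) (f := f) hAdm hZ hX (hws w) h.1
      (Nat.lt_succ_self _) hww' (hw1 w) (hw1 w')
      (cast (𝕐 (hws w) w.1 (Nat.lt_succ_self _) (hw1 w)).symm (mm.1 w))
    erw [cast_cast, cast_self] at h3
    have h4 : cast (𝕐 (show φ w'.1 + 1 ≤ φ w.1 + 1 by omega) w'.1
          (Nat.lt_succ_self _) hww')
        ((𝕊 (φ w.1 + 1)).Ym h.1 (Nat.lt_succ_self _) hww' (mm.1 w)) = mm.1 w' := mm.2 h
    rw [h3, cast_cast] at h4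
    erw [← cast_symm]
    exact h4
  have mz : ∀ w : RedCoslice C n, (𝕊 (φ n + 1)).po w.1 (hw1 w)
      (cast (𝕐 (hws w) w.1 (Nat.lt_succ_self _) (hw1 w)).symm (mm.1 w))
      = Z.map w.2.1 z := by
    intro w
    have h2 : (𝕊 (φ w.1 + 1)).po w.1 (Nat.lt_succ_self _) (mm.1 w) = Z.map w.2.1 z :=
      congrFun (congrArg Subtype.val cond) w
    have h3 := stages_po_stable (hφ := hφ) (f := f) hAdm hZ hX (hws w) w.1
      (Nat.lt_succ_self _) (hw1 w)
      (cast (𝕐 (hws w) w.1 (Nat.lt_succ_self _) (hw1 w)).symm (mm.1 w))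
    erw [h3, cast_cast, cast_self]
    exact h2
  have hF := (𝕊 (φ n + 1)).hfib n (Nat.lt_succ_self _)
    (fun w => cast (𝕐 (hws w) w.1 (Nat.lt_succ_self _) (hw1 w)).symm (mm.1 w)) mc z mz
  refine essFib_of_equiv (Equiv.subtypeEquivRight ?_) hF
  intro y
  constructor
  · intro h
    have h' := Subtype.ext_iff.mp h
    refine ⟨fun w => ?_, ?_⟩
    · have h5 : cast (𝕐 (hws w) w.1 (Nat.lt_succ_self _) (hw1 w))
          ((𝕊 (φ n + 1)).Ym w.2.1 (Nat.lt_succ_self _) (hw1 w) y) = mm.1 w :=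
        congrFun (congrArg Subtype.val (congrArg Prod.fst h')) w
      erw [cast_symm] at h5
      exact h5
    · exact congrArg Prod.snd h'
  · rintro ⟨h1, h2⟩
    apply Subtype.ext
    apply Prod.ext
    · apply Subtype.ext
      funext w
      show cast (𝕐 (hws w) w.1 (Nat.lt_succ_self _) (hw1 w))
        ((𝕊 (φ n + 1)).Ym w.2.1 (Nat.lt_succ_self _) (hw1 w) y) = mm.1 w
      erw [h1 w, cast_cast, cast_self]
    · exact h2

include hφ hAdm hZ hX in
theorem main₁ : ∃ (Y : SFunctor C) (i : SNat X Y) (p : SNat Y Z),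
    (∀ n, IsHEquiv T (i.app n)) ∧ IsReedyFibration T p ∧
    ∀ n a, p.app n (i.app n a) = f.app n a :=
  ⟨Yinf (φ := φ) (hφ := hφ) (f := f) hAdm hZ hX,
    iInf (φ := φ) (hφ := hφ) (f := f) hAdm hZ hX,
    pInf (φ := φ) (hφ := hφ) (f := f) hAdm hZ hX,
    fun n => (𝕊 (φ n + 1)).hheq n (Nat.lt_succ_self _),
    reedy_pInf (φ := φ) (hφ := hφ) (f := f) hAdm hZ hX,
    fun n a => (𝕊 (φ n + 1)).pio n (Nat.lt_succ_self _) a⟩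

end Main8
end ReedyAux
/-- over an admissible inverse category, every map of
fibrant-type-valued diagrams factors as a levelwise equivalence followed by a
Reedy fibration; in particular every type-valued diagram has a Reedy fibrant
replacement. -/
theorem reedy_fibrant_factorisation (T : TLTT) (C : SCat) (hC : IsInverse C)
    (hAdm : Admissible T C) :
    (∀ (X Z : SFunctor C), (∀ n, T.Fib (X.obj n)) → (∀ n, T.Fib (Z.obj n)) →
      ∀ f : SNat X Z, ∃ (Y : SFunctor C) (i : SNat X Y) (p : SNat Y Z),
        (∀ n, TwoLevel.IsHEquiv T (i.app n)) ∧ IsReedyFibration T p ∧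
        ∀ n a, p.app n (i.app n a) = f.app n a) ∧
    (∀ X : SFunctor C, (∀ n, T.Fib (X.obj n)) →
      ∃ (Y : SFunctor C) (η : SNat X Y), ReedyFibrant T Y ∧
        ∀ n, TwoLevel.IsHEquiv T (η.app n)) := by
  obtain ⟨φ, hφ⟩ := hC
  constructor
  · intro X Z hX hZ f
    exact ReedyAux.main₁ (φ := φ) (hφ := hφ) (f := f) hAdm hZ hX
  · intro X hX
    have hZ : ∀ n, T.Fib ((constF C PUnit).obj n) := fun _ => T.fibUnit
    obtain ⟨Y, i, p, h1, h2, _h3⟩ := ReedyAux.main₁ (φ := φ) (hφ := hφ)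
      (f := (⟨fun _ _ => PUnit.unit, fun _ _ => rfl⟩ : SNat X (constF C PUnit)))
      hAdm hZ hX
    refine ⟨Y, i, ?_, h1⟩
    intro n m
    have cond : matchNat p n m = canMatch (constF C PUnit) n PUnit.unit := by
      apply Subtype.ext; funext w; rfl
    have hF := h2 n ⟨(m, PUnit.unit), cond⟩
    refine ReedyAux.essFib_of_equiv (Equiv.subtypeEquivRight ?_) hF
    intro y
    constructor
    · intro h
      apply Subtype.ext
      apply Prod.ext
      · exact h
      · rfl
    · intro h
      exact congrArg Prod.fst (Subtype.ext_iff.mp h)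
end
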